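/- Let n ≥ 2 be an integer, let b be a nonzero algebraic integer, and let w be a periodic point of g_b of period h ≥ 1 whose multiplier μ = ∏_{j=0}^{h-1} (g_b^{∘j}(w))^{n-1} is a primitive m-th root of unity. Set r = h·m. Then n^r − 1 lies in the ideal b·𝒪, where 𝒪 is the ring of all algebraic integers; that is, (n^r − 1)/b is an algebraic integer. -/

import Mathlib

set_option maxHeartbeats 800000
set_option synthInstance.maxHeartbeats 100000

open Polynomial Finset

theorem stmt8 (n : ℕ) (hn : 2 ≤ n) (b : ℂ) (hb0 : b ≠ 0) (hb : IsIntegral ℤ b)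
    (g : ℂ → ℂ) (hg : g = fun z : ℂ => (z ^ n + b) / n)
    (w : ℂ) (h : ℕ) (hh : 1 ≤ h) (hper : g^[h] w = w)
    (μ : ℂ) (hμ : μ = ∏ j ∈ Finset.range h, (g^[j] w) ^ (n - 1))
    (m : ℕ) (hm : 1 ≤ m) (hprim : IsPrimitiveRoot μ m)
    (r : ℕ) (hr : r = h * m) :
    IsIntegral ℤ (((n : ℂ) ^ r - 1) / b) := by
  have hn0 : (n : ℂ) ≠ 0 := by
    have : (0 : ℕ) < n := by omega
    exact_mod_cast this.ne'
  have hgn : ∀ z : ℂ, (n : ℂ) * g z = z ^ n + b := by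
    intro z; rw [hg]; field_simp
  set A := integralClosure ℤ ℂ with hA
  set bA : A := ⟨b, hb⟩ with hbA
  -- key polynomial construction
  have key : ∀ k : ℕ, ∃ (P : Polynomial A) (dk : ℕ), P.Monic ∧ P.natDegree = n ^ k ∧
      ∀ z : ℂ, aeval z P = (n : ℂ) ^ dk * g^[k] z := by
    intro k
    induction k with
    | zero =>
      refine ⟨X, 0, monic_X, by simp, fun z => by simp⟩
    | succ k ih =>
      obtain ⟨P, dk, hmon, hdeg, he⟩ := ih
      refine ⟨P ^ n + C (bA * (n : A) ^ (n * dk)), n * dk + 1, ?_, ?_, ?_⟩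
      · apply (hmon.pow n).add_of_left
        refine lt_of_le_of_lt degree_C_le ?_
        rw [degree_eq_natDegree (hmon.pow n).ne_zero, hmon.natDegree_pow, hdeg]
        exact_mod_cast (by positivity : 0 < n * n ^ k)
      · rw [natDegree_add_C, hmon.natDegree_pow, hdeg]
        exact (pow_succ' n k).symm
      · intro z
        have hcoe : (algebraMap A ℂ) (bA * (n : A) ^ (n * dk)) = b * (n : ℂ) ^ (n * dk) := by
          push_cast [map_mul, map_pow, map_natCast]; rfl
        rw [map_add, map_pow, he, aeval_C, hcoe, Function.iterate_succ_apply']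
        have := hgn (g^[k] z)
        rw [mul_pow, ← pow_mul, mul_comm dk n]
        calc ((n:ℂ)) ^ (n * dk) * (g^[k] z) ^ n + b * (n:ℂ) ^ (n * dk)
            = (n:ℂ) ^ (n * dk) * ((g^[k] z) ^ n + b) := by ring
          _ = (n:ℂ) ^ (n * dk) * ((n : ℂ) * g (g^[k] z)) := by rw [this]
          _ = (n:ℂ) ^ (n * dk + 1) * g (g^[k] z) := by ring
  -- each orbit point is an algebraic integer
  have hint : ∀ j : ℕ, IsIntegral ℤ (g^[j] w) := by
    intro j
    have hfix : g^[h] (g^[j] w) = g^[j] w := by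
      rw [← Function.iterate_add_apply, add_comm, Function.iterate_add_apply, hper]
    obtain ⟨P, dk, hmon, hdeg, he⟩ := key h
    have hQmonic : (P - C ((n : A) ^ dk) * X).Monic := by
      rw [sub_eq_add_neg]
      apply hmon.add_of_left
      rw [degree_neg]
      have h1 : (1 : ℕ) < n ^ h := Nat.one_lt_pow (by omega) (by omega)
      calc degree (C ((n : A) ^ dk) * X)
          ≤ 0 + 1 := (degree_mul_le _ _).trans (add_le_add degree_C_le degree_X_le)
        _ = ((1 : ℕ) : WithBot ℕ) := by norm_num
        _ < ((n ^ h : ℕ) : WithBot ℕ) := by exact_mod_cast h1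
        _ = P.degree := by rw [degree_eq_natDegree hmon.ne_zero, hdeg]
    apply isIntegral_trans (A := A) (g^[j] w)
    refine ⟨P - C ((n : A) ^ dk) * X, hQmonic, ?_⟩
    have : (aeval (g^[j] w)) (P - C ((n : A) ^ dk) * X) = 0 := by
      rw [map_sub, he, hfix, map_mul, aeval_C, aeval_X, map_pow, map_natCast]
      ring
    simpa [aeval_def] using this
  -- orbit points inside A
  set ow : ℕ → A := fun j => ⟨g^[j] w, hint j⟩ with how
  have rel : ∀ j : ℕ, (n : A) * ow (j + 1) = ow j ^ n + bA := by
    intro j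
    apply Subtype.ext
    push_cast
    show (n : ℂ) * g^[j+1] w = (g^[j] w) ^ n + b
    rw [Function.iterate_succ_apply', hgn]
  set W : A := ∏ j ∈ Finset.range h, ow j with hW
  have hWcoe : (W : ℂ) = ∏ j ∈ Finset.range h, g^[j] w := by
    rw [hW]; push_cast; rfl
  have hμcoe : ((W ^ (n - 1) : A) : ℂ) = μ := by
    push_cast [hWcoe, hμ, ← Finset.prod_pow]
    rfl
  have hμpow : (W ^ (n - 1)) ^ m = 1 := by
    apply Subtype.ext
    push_cast [hμcoe]
    exact hprim.pow_eq_one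
  have hWunit : IsUnit W := by
    apply IsUnit.of_pow_eq_one (n := (n - 1) * m)
    · rw [pow_mul]; exact hμpow
    · exact Nat.mul_ne_zero (by omega) (by omega)
  -- w ≠ 0 and orbit shift
  have hw0 : w ≠ 0 := by
    intro e
    have hμ0 : μ = 0 := by
      rw [hμ]
      apply Finset.prod_eq_zero (Finset.mem_range.mpr hh)
      simp [e, zero_pow (by omega : n - 1 ≠ 0)]
    exact (hprim.ne_zero (by omega)) hμ0
  have how0 : ow 0 ≠ 0 := by
    intro e
    exact hw0 (by simpa [how] using congrArg Subtype.val e)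
  have hshift : (∏ j ∈ Finset.range h, ow (j + 1)) = W := by
    have h1 : (∏ j ∈ Finset.range (h + 1), ow j) = (∏ j ∈ Finset.range h, ow (j + 1)) * ow 0 :=
      Finset.prod_range_succ' ow h
    have h2 : (∏ j ∈ Finset.range (h + 1), ow j) = W * ow h := Finset.prod_range_succ ow h
    have h3 : ow h = ow 0 := Subtype.ext (by simpa [how] using hper)
    rw [h3] at h2
    exact mul_right_cancel₀ how0 (h1.symm.trans h2)
  -- divisibility lemma
  have hdvd1 : ∀ (f : ℕ → A) (k : ℕ),
      bA ∣ (∏ j ∈ Finset.range k, (f j + bA)) - ∏ j ∈ Finset.range k, f j := by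
    intro f k
    induction k with
    | zero => simp
    | succ k ih =>
      rw [Finset.prod_range_succ, Finset.prod_range_succ]
      have : (∏ j ∈ Finset.range k, (f j + bA)) * (f k + bA) -
          (∏ j ∈ Finset.range k, f j) * f k =
          ((∏ j ∈ Finset.range k, (f j + bA)) - ∏ j ∈ Finset.range k, f j) * f k +
          (∏ j ∈ Finset.range k, (f j + bA)) * bA := by ring
      rw [this]
      exact dvd_add (ih.mul_right _) (Dvd.intro_left _ rfl)
  -- main divisibility
  have hmain : bA ∣ (n : A) ^ h * W - W ^ n := by
    have h1 : (∏ j ∈ Finset.range h, (ow j ^ n + bA)) = (n : A) ^ h * W := by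
      calc (∏ j ∈ Finset.range h, (ow j ^ n + bA))
          = ∏ j ∈ Finset.range h, ((n : A) * ow (j + 1)) := by
            refine Finset.prod_congr rfl fun j _ => (rel j).symm
        _ = (n : A) ^ h * ∏ j ∈ Finset.range h, ow (j + 1) := by
            rw [Finset.prod_mul_distrib, Finset.prod_const, Finset.card_range]
        _ = (n : A) ^ h * W := by rw [hshift]
    have h2 : (∏ j ∈ Finset.range h, ow j ^ n) = W ^ n := by
      rw [hW, ← Finset.prod_pow]
    have := hdvd1 (fun j => ow j ^ n) h
    rwa [h1, h2] at this
  have hsub : bA ∣ (n : A) ^ h - W ^ (n - 1) := by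
    have hWn : W ^ (n - 1) * W = W ^ n := by
      rw [← pow_succ]
      congr 1
      omega
    have : ((n : A) ^ h - W ^ (n - 1)) * W = (n : A) ^ h * W - W ^ n := by
      rw [sub_mul, hWn]
    rw [← this] at hmain
    exact (hWunit.dvd_mul_right).mp hmain
  have hfin : bA ∣ (n : A) ^ r - 1 := by
    have := (sub_dvd_pow_sub_pow ((n : A) ^ h) (W ^ (n - 1)) m)
    rw [hμpow, ← pow_mul, ← hr] at this
    exact hsub.trans this
  -- conclude
  obtain ⟨t, ht⟩ := hfin
  have htc : (n : ℂ) ^ r - 1 = b * (t : ℂ) := by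
    have := congrArg (Subtype.val) ht
    push_cast at this
    exact this
  rw [htc, mul_div_cancel_left₀ _ hb0]
  exact t.2
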